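/- Let R be a commutative G-graded ring. Then R is a G-graded domain if and only if R is G-graded reduced and the intersection graph Gr_G(R) of graded ideals is complete. -/

import Mathlib

variable {G R : Type*} [AddGroup G] [DecidableEq G] [CommRing R]

/-- The set of proper nontrivial `G`-graded ideals of `R`. -/
def hV (𝒜 : G → AddSubgroup R) [GradedRing 𝒜] : Set (Ideal R) :=
  {I | I ≠ ⊥ ∧ I ≠ ⊤ ∧ Ideal.IsHomogeneous 𝒜 I}

/-- The intersection graph on a set of ideals: two distinct ideals are
adjacent iff their intersection is nonzero. -/
def interGraph (V : Set (Ideal R)) : SimpleGraph V where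
  Adj I J := I ≠ J ∧ (I : Ideal R) ⊓ (J : Ideal R) ≠ ⊥
  symm := ⟨fun I J ⟨h1, h2⟩ => ⟨h1.symm, by rwa [inf_comm] at h2⟩⟩
  loopless := ⟨fun I ⟨h1, _⟩ => h1 rfl⟩

private lemma exists_hom_ne_zero (𝒜 : G → AddSubgroup R) [GradedRing 𝒜]
    {I : Ideal R} (hhom : Ideal.IsHomogeneous 𝒜 I) (h0 : I ≠ ⊥) :
    ∃ g a, a ∈ 𝒜 g ∧ a ∈ I ∧ a ≠ 0 := by
  obtain ⟨x, hxI, hx0⟩ := Submodule.exists_mem_ne_zero_of_ne_bot h0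
  by_contra hc
  push_neg at hc
  apply hx0
  classical
  conv_lhs => rw [← DirectSum.sum_support_decompose 𝒜 x]
  refine Finset.sum_eq_zero fun i _ => ?_
  exact hc i _ (SetLike.coe_mem _) (hhom i hxI)

private lemma comp_zero (𝒜 : G → AddSubgroup R) [GradedRing 𝒜] {x : R}
    (h : ∀ i, (DirectSum.decompose 𝒜 x i : R) = 0) : x = 0 := by
  classical
  conv_lhs => rw [← DirectSum.sum_support_decompose 𝒜 x]
  exact Finset.sum_eq_zero fun i _ => h i

/-- A commutative `G`-graded ring is a `G`-graded domain (no nonzero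
homogeneous zero-divisors) iff it is `G`-graded reduced (no nonzero nilpotent
homogeneous elements) and the intersection graph of graded ideals is complete. -/
theorem stmt4 (𝒜 : G → AddSubgroup R) [GradedRing 𝒜] [Nontrivial R] :
    (∀ (g h : G), ∀ a ∈ 𝒜 g, ∀ b ∈ 𝒜 h, a * b = 0 → a = 0 ∨ b = 0) ↔
      ((∀ (g : G), ∀ a ∈ 𝒜 g, IsNilpotent a → a = 0) ∧
        (∀ I J : hV 𝒜, I ≠ J → (interGraph (hV 𝒜)).Adj I J)) := by
  constructor
  · intro hdom
    constructor
    · intro g a ha ⟨n, hn⟩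
      induction n with
      | zero => simp at hn
      | succ n ih =>
        rcases Nat.eq_zero_or_pos n with rfl | hp
        · simpa using hn
        · rw [pow_succ] at hn
          rcases hdom (n • g) g (a ^ n) (SetLike.pow_mem_graded n ha) a ha hn with h1 | h2
          · exact ih h1
          · exact h2
    · rintro ⟨I, hI0, hItop, hIhom⟩ ⟨J, hJ0, hJtop, hJhom⟩ hne
      refine ⟨hne, ?_⟩
      obtain ⟨g, a, hag, haI, ha0⟩ := exists_hom_ne_zero 𝒜 hIhom hI0
      obtain ⟨h, b, hbh, hbJ, hb0⟩ := exists_hom_ne_zero 𝒜 hJhom hJ0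
      intro hbot
      have hab : a * b ∈ I ⊓ J :=
        ⟨I.mul_mem_right b haI, J.mul_mem_left a hbJ⟩
      rw [hbot] at hab
      rcases hdom g h a hag b hbh (by simpa using hab) with h1 | h2
      · exact ha0 h1
      · exact hb0 h2
  · rintro ⟨hred, hcomp⟩ g h a ha b hb hab
    by_contra hc
    push_neg at hc
    obtain ⟨ha0, hb0⟩ := hc
    set I := Ideal.span {a} with hIdef
    set J := Ideal.span {b} with hJdef
    have hIhom : Ideal.IsHomogeneous 𝒜 I :=
      Ideal.homogeneous_span 𝒜 {a} (by rintro r rfl; exact ⟨g, ha⟩)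
    have hJhom : Ideal.IsHomogeneous 𝒜 J :=
      Ideal.homogeneous_span 𝒜 {b} (by rintro r rfl; exact ⟨h, hb⟩)
    have hI0 : I ≠ ⊥ := fun hbot => ha0 (by
      have := Ideal.mem_span_singleton_self a
      rw [← hIdef, hbot] at this; simpa using this)
    have hJ0 : J ≠ ⊥ := fun hbot => hb0 (by
      have := Ideal.mem_span_singleton_self b
      rw [← hJdef, hbot] at this; simpa using this)
    have hItop : I ≠ ⊤ := by
      intro htop
      have : (1 : R) ∈ I := htop ▸ Submodule.mem_top
      rw [hIdef, Ideal.mem_span_singleton'] at this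
      obtain ⟨r, hr⟩ := this
      apply hb0
      calc b = r * a * b := by rw [hr, one_mul]
        _ = r * (a * b) := by ring
        _ = 0 := by rw [hab, mul_zero]
    have hJtop : J ≠ ⊤ := by
      intro htop
      have : (1 : R) ∈ J := htop ▸ Submodule.mem_top
      rw [hJdef, Ideal.mem_span_singleton'] at this
      obtain ⟨r, hr⟩ := this
      apply ha0
      calc a = a * (r * b) := by rw [hr, mul_one]
        _ = r * (a * b) := by ring
        _ = 0 := by rw [hab, mul_zero]
    by_cases hIJ : I = J
    · -- then a ∈ span {b}, so a² = 0
      have haJ : a ∈ J := hIJ ▸ Ideal.mem_span_singleton_self a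
      rw [hJdef, Ideal.mem_span_singleton'] at haJ
      obtain ⟨t, ht⟩ := haJ
      apply ha0
      refine hred g a ha ⟨2, ?_⟩
      calc a ^ 2 = (t * b) * a := by rw [ht]; ring
        _ = t * (a * b) := by ring
        _ = 0 := by rw [hab, mul_zero]
    · have hadj := hcomp ⟨I, hI0, hItop, hIhom⟩ ⟨J, hJ0, hJtop, hJhom⟩
        (fun hmk => hIJ (congrArg Subtype.val hmk))
      apply hadj.2
      rw [eq_bot_iff]
      rintro c ⟨hcI, hcJ⟩
      simp only [Ideal.mem_bot]
      refine comp_zero 𝒜 fun i => ?_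
      have hci_I := hIhom i hcI
      have hci_J := hJhom i hcJ
      rw [hIdef, Ideal.mem_span_singleton'] at hci_I
      rw [hJdef, Ideal.mem_span_singleton'] at hci_J
      obtain ⟨r, hr⟩ := hci_I
      obtain ⟨s, hs⟩ := hci_J
      refine hred i _ (SetLike.coe_mem _) ⟨2, ?_⟩
      calc (DirectSum.decompose 𝒜 c i : R) ^ 2
          = (r * a) * (s * b) := by rw [hr, hs]; ring
        _ = (r * s) * (a * b) := by ring
        _ = 0 := by rw [hab, mul_zero]
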